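/- Let t ≥ 0 and let (γ_n)_{n≥2} be a sequence of strictly positive reals satisfying the recursion γ_n = γ_{n+1} + log(1 + γ_{n+1})/(t + n − 1) for all n ≥ 2. Then (γ_n) is decreasing with limit 0, the series Σ_{n≥2} γ_{n+1}/(t + n − 1) converges, and the sequence y_n := (t + n − 1)·γ_n is bounded above. -/

import Mathlib

open Filter

lemma my_le_log_one_add (x : ℝ) (hx : 0 ≤ x) : x / (1 + x) ≤ Real.log (1 + x) := by
  have h1 : (0:ℝ) < 1 + x := by linarith
  have h2 : (0:ℝ) < (1+x)⁻¹ := by positivity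
  have h3 := Real.log_le_sub_one_of_pos h2
  rw [Real.log_inv] at h3
  have h4 : x/(1+x) = 1 - (1+x)⁻¹ := by field_simp; ring
  linarith

lemma my_log_one_add_le (x : ℝ) (hx : 0 ≤ x) : Real.log (1 + x) ≤ x := by
  have := Real.log_le_sub_one_of_pos (show (0:ℝ) < 1 + x by linarith)
  linarith

lemma my_sub_log_le_sq (x : ℝ) (hx : 0 ≤ x) : x - Real.log (1 + x) ≤ x ^ 2 := by
  have h1 := my_le_log_one_add x hx
  have h2 : (0:ℝ) < 1 + x := by linarith
  have h5 : x - x/(1+x) = x^2/(1+x) := by field_simp; ring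
  have h3 : x^2/(1+x) ≤ x^2 := by
    apply div_le_self (by positivity); linarith
  linarith

lemma my_not_summable (t : ℝ) (ht : 0 ≤ t) : ¬ Summable (fun m : ℕ => 1 / (t + (m:ℝ) + 1)) := by
  intro hsum
  have h1 : Summable (fun m : ℕ => (t+2)⁻¹ * (1 / ((m:ℝ) + 1))) := by
    apply Summable.of_nonneg_of_le (fun m => by positivity) (fun m => ?_) hsum
    have hm : (0:ℝ) ≤ (m:ℝ) := Nat.cast_nonneg m
    rw [inv_mul_eq_div, div_div]
    apply one_div_le_one_div_of_le (by linarith)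
    nlinarith
  have h2 : Summable (fun m : ℕ => (1 / ((m:ℝ) + 1))) := by
    have := h1.mul_left (t+2)
    refine this.congr (fun m => ?_)
    rw [← mul_assoc, mul_inv_cancel₀ (by linarith : (t+2:ℝ) ≠ 0), one_mul]
  have h3 : Summable (fun n : ℕ => 1 / (n:ℝ)) := by
    rw [← summable_nat_add_iff 1]
    exact h2.congr (fun m => by norm_num)
  exact Real.not_summable_one_div_natCast h3

/-- If `t ≥ 0` and `(γ_n)_{n≥2}` are strictly positive reals with
`γ_n = γ_{n+1} + log(1 + γ_{n+1})/(t + n − 1)` for all `n ≥ 2`, then `(γ_n)` is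
decreasing with limit `0`, the series `Σ_{n≥2} γ_{n+1}/(t + n − 1)` converges, and
`y_n = (t + n − 1)·γ_n` is bounded above. -/
theorem gamma_recursion_lemma (t : ℝ) (ht : 0 ≤ t) (γ : ℕ → ℝ)
    (hpos : ∀ n : ℕ, 2 ≤ n → 0 < γ n)
    (hrec : ∀ n : ℕ, 2 ≤ n →
      γ n = γ (n + 1) + Real.log (1 + γ (n + 1)) / (t + (n : ℝ) - 1)) :
    (∀ n : ℕ, 2 ≤ n → γ (n + 1) < γ n) ∧
      Filter.Tendsto (fun n : ℕ => γ n) Filter.atTop (nhds 0) ∧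
      Summable (fun m : ℕ => γ ((m + 2) + 1) / (t + ((m : ℝ) + 2) - 1)) ∧
      ∃ M : ℝ, ∀ n : ℕ, 2 ≤ n → (t + (n : ℝ) - 1) * γ n ≤ M := by
  have hd : ∀ n : ℕ, 2 ≤ n → (0:ℝ) < t + (n:ℝ) - 1 := by
    intro n hn
    have : (2:ℝ) ≤ (n:ℝ) := by exact_mod_cast hn
    linarith
  have hdec : ∀ n : ℕ, 2 ≤ n → γ (n+1) < γ n := by
    intro n hn
    have h1 := hrec n hn
    have h2 : 0 < Real.log (1 + γ (n+1)) :=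
      Real.log_pos (by linarith [hpos (n+1) (by omega)])
    have h3 := hd n hn
    nlinarith [div_pos h2 h3]
  have hanti : ∀ m n : ℕ, 2 ≤ m → m ≤ n → γ n ≤ γ m := by
    intro m n hm hmn
    induction n, hmn using Nat.le_induction with
    | base => exact le_refl _
    | succ n hmn ih => exact le_trans (hdec n (by omega)).le ih
  -- summability of differences
  have hDnn : ∀ m : ℕ, 0 ≤ γ (m+2) - γ (m+3) := by
    intro m
    have := hdec (m+2) (by omega)
    linarith
  have hD : Summable (fun m : ℕ => γ (m+2) - γ (m+3)) := by
    apply summable_of_sum_range_le (c := γ 2) hDnn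
    intro n
    have h1 : ∑ i ∈ Finset.range n, (γ (i+2) - γ (i+3)) = γ 2 - γ (n+2) := by
      have := Finset.sum_range_sub' (fun m => γ (m+2)) n
      simpa using this
    have := hpos (n+2) (by omega)
    linarith [h1.le, h1.ge]
  -- key recursion consequences, in shifted form
  have hrec' : ∀ m : ℕ, γ (m+2) - γ (m+3) = Real.log (1 + γ (m+3)) / (t + (m:ℝ) + 1) := by
    intro m
    have h := hrec (m+2) (by omega)
    have hc : ((m+2:ℕ):ℝ) = (m:ℝ) + 2 := by push_cast; ring
    rw [hc] at h
    have : t + ((m:ℝ)+2) - 1 = t + (m:ℝ) + 1 := by ring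
    rw [this] at h
    have : γ (m+2+1) = γ (m+3) := by norm_num
    rw [this] at h
    linarith
  have hS' : Summable (fun m : ℕ => γ (m+3) / (t + (m:ℝ) + 1)) := by
    apply Summable.of_nonneg_of_le (fun m => ?_) (fun m => ?_) (hD.mul_left (1 + γ 2))
    · have := hpos (m+3) (by omega)
      have := hd (m+3) (by omega)
      have hm : (0:ℝ) ≤ (m:ℝ) := Nat.cast_nonneg m
      positivity
    · have ha : 0 < γ (m+3) := hpos (m+3) (by omega)
      have hb : γ (m+3) ≤ γ 2 := hanti 2 (m+3) (by omega) (by omega)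
      have hdm : (0:ℝ) < t + (m:ℝ) + 1 := by
        have : (0:ℝ) ≤ (m:ℝ) := Nat.cast_nonneg m
        linarith
      have hlog := my_le_log_one_add (γ (m+3)) ha.le
      rw [div_le_iff₀ (by linarith)] at hlog
      have hkey : γ (m+3) ≤ (1 + γ 2) * Real.log (1 + γ (m+3)) := by
        have hln : 0 ≤ Real.log (1 + γ (m+3)) := Real.log_nonneg (by linarith)
        nlinarith
      rw [hrec' m, ← mul_div_assoc]
      gcongr
  -- limit is zero
  have htend : Tendsto (fun n : ℕ => γ n) atTop (nhds 0) := by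
    have hantif : Antitone (fun m : ℕ => γ (m+2)) :=
      antitone_nat_of_succ_le (fun m => (hdec (m+2) (by omega)).le)
    have hbdd : BddBelow (Set.range (fun m : ℕ => γ (m+2))) := by
      refine ⟨0, ?_⟩
      rintro x ⟨m, rfl⟩
      exact (hpos (m+2) (by omega)).le
    have htd := tendsto_atTop_ciInf hantif hbdd
    have hL0 : 0 ≤ ⨅ m : ℕ, γ (m+2) :=
      le_ciInf fun m => (hpos (m+2) (by omega)).le
    have hLeq : (⨅ m : ℕ, γ (m+2)) = 0 := by
      by_contra hne
      have hLpos : 0 < ⨅ m : ℕ, γ (m+2) := lt_of_le_of_ne hL0 (Ne.symm hne)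
      set L := ⨅ m : ℕ, γ (m+2) with hLdef
      have hLle : ∀ m : ℕ, L ≤ γ (m+2) := fun m =>
        ciInf_le hbdd m
      have hsum1 : Summable (fun m : ℕ => L * (1/(t+(m:ℝ)+1))) := by
        apply Summable.of_nonneg_of_le (fun m => ?_) (fun m => ?_) hS'
        · have hm : (0:ℝ) ≤ (m:ℝ) := Nat.cast_nonneg m
          positivity
        · have h1 : L ≤ γ (m+3) := hLle (m+1)
          have hm : (0:ℝ) ≤ (m:ℝ) := Nat.cast_nonneg m
          rw [mul_one_div]
          gcongr
      have h2 := hsum1.mul_left L⁻¹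
      have h3 : Summable (fun m : ℕ => 1/(t+(m:ℝ)+1)) := by
        have heq : (fun m : ℕ => 1/(t+(m:ℝ)+1))
            = fun m : ℕ => L⁻¹ * (L * (1/(t+(m:ℝ)+1))) := by
          funext m
          rw [← mul_assoc, inv_mul_cancel₀ hLpos.ne', one_mul]
        rw [heq]
        exact h2
      exact my_not_summable t ht h3
    rw [hLeq] at htd
    exact (tendsto_add_atTop_iff_nat 2).mp htd
  -- summable in the statement's form
  have hSgoal : Summable (fun m : ℕ => γ ((m + 2) + 1) / (t + ((m : ℝ) + 2) - 1)) := by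
    have heq : (fun m : ℕ => γ ((m + 2) + 1) / (t + ((m : ℝ) + 2) - 1))
        = fun m : ℕ => γ (m+3) / (t + (m:ℝ) + 1) := by
      funext m
      rw [show m + 2 + 1 = m + 3 from by omega]
      congr 1
      ring
    rw [heq]
    exact hS'
  refine ⟨hdec, htend, hSgoal, ?_⟩
  -- boundedness of y n = (t+n-1) γ n
  set y : ℕ → ℝ := fun n => (t + (n:ℝ) - 1) * γ n with hy_def
  have hy_pos : ∀ n : ℕ, 2 ≤ n → 0 < y n := fun n hn =>
    mul_pos (hd n hn) (hpos n hn)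
  have hy_step : ∀ n : ℕ, 2 ≤ n →
      y (n+1) = y n + (γ (n+1) - Real.log (1 + γ (n+1))) := by
    intro n hn
    have h := hrec n hn
    have hc : ((n+1:ℕ):ℝ) = (n:ℝ) + 1 := by push_cast; ring
    simp only [hy_def, hc]
    rw [h]
    have hne : t + (n:ℝ) - 1 ≠ 0 := (hd n hn).ne'
    field_simp
    ring
  have hy_mono : ∀ m n : ℕ, 2 ≤ m → m ≤ n → y m ≤ y n := by
    intro m n hm hmn
    induction n, hmn using Nat.le_induction with
    | base => exact le_refl _
    | succ n hmn ih =>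
      have hst := hy_step n (by omega)
      have hg : 0 < γ (n+1) := hpos (n+1) (by omega)
      have hlog := my_log_one_add_le (γ (n+1)) hg.le
      linarith
  -- choose a tail index with small tail sum
  set f : ℕ → ℝ := fun m => γ (m+3) / (t + (m:ℝ) + 1) with hf_def
  have hf_nn : ∀ m : ℕ, 0 ≤ f m := by
    intro m
    have h1 := (hpos (m+3) (by omega)).le
    have hm : (0:ℝ) ≤ (m:ℝ) := Nat.cast_nonneg m
    have : (0:ℝ) < t + (m:ℝ) + 1 := by linarith
    simp only [hf_def]
    positivity
  obtain ⟨N0, hN0⟩ : ∃ N0 : ℕ, ∑' k : ℕ, f (k + N0) ≤ 1/4 := by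
    have hps := hS'.hasSum.tendsto_sum_nat
    have hdiff : Tendsto (fun N : ℕ => (∑' m, f m) - ∑ k ∈ Finset.range N, f k)
        atTop (nhds 0) := by
      have := tendsto_const_nhds (x := ∑' m, f m) (f := atTop (α := ℕ)) |>.sub hps
      simpa using this
    have hev := hdiff.eventually (eventually_le_nhds (show (0:ℝ) < 1/4 by norm_num))
    obtain ⟨N0, hN0⟩ := hev.exists
    refine ⟨N0, ?_⟩
    have hadd := Summable.sum_add_tsum_nat_add (f := f) N0 hS'
    linarith
  set n0 : ℕ := N0 + 2 with hn0_def
  have hkey : ∀ N : ℕ, n0 ≤ N → y N ≤ y n0 + (1/4) * y N := by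
    intro N hN
    have hyN0 : 0 ≤ y N := (hy_pos N (by omega)).le
    have hsum_eq : y N - y n0 = ∑ k ∈ Finset.range (N - n0), (y (n0+k+1) - y (n0+k)) := by
      have h1 : ∑ k ∈ Finset.range (N - n0), (y (n0+k+1) - y (n0+k))
          = y (n0+(N-n0)) - y (n0+0) :=
        Finset.sum_range_sub (fun k => y (n0+k)) (N - n0)
      rw [show n0 + (N - n0) = N from by omega] at h1
      simpa using h1.symm
    have hterm : ∀ k ∈ Finset.range (N - n0),
        y (n0+k+1) - y (n0+k) ≤ y N * f (k + N0) := by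
      intro k hk
      have hklt : k < N - n0 := Finset.mem_range.mp hk
      have hn2 : 2 ≤ n0 + k := by omega
      have hst := hy_step (n0+k) hn2
      have hg : 0 < γ (n0+k+1) := hpos (n0+k+1) (by omega)
      have hsq := my_sub_log_le_sq (γ (n0+k+1)) hg.le
      have hyle : y (n0+k+1) ≤ y N := hy_mono (n0+k+1) N (by omega) (by omega)
      have hcast : ((n0+k+1:ℕ):ℝ) = (n0:ℝ) + (k:ℝ) + 1 := by push_cast; ring
      have hyval : y (n0+k+1) = (t + (n0:ℝ) + (k:ℝ)) * γ (n0+k+1) := by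
        simp only [hy_def, hcast]; ring
      have hden : (0:ℝ) < t + (n0:ℝ) + (k:ℝ) := by
        have h1 : (2:ℝ) ≤ (n0:ℝ) := by exact_mod_cast (by omega : 2 ≤ n0)
        have h2 : (0:ℝ) ≤ (k:ℝ) := Nat.cast_nonneg k
        linarith
      have hsq2 : γ (n0+k+1) ^ 2 ≤ y N * γ (n0+k+1) / (t + (n0:ℝ) + (k:ℝ)) := by
        rw [le_div_iff₀ hden]
        nlinarith [hyval, hyle, hg]
      have hfval : f (k + N0) = γ (n0+k+1) / (t + (n0:ℝ) + (k:ℝ) - 1) := by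
        simp only [hf_def]
        have h1 : k + N0 + 3 = n0 + k + 1 := by omega
        have h2 : t + ((k+N0:ℕ):ℝ) + 1 = t + (n0:ℝ) + (k:ℝ) - 1 := by
          simp only [hn0_def]; push_cast; ring
        rw [h1, h2]
      have hden1 : (0:ℝ) < t + (n0:ℝ) + (k:ℝ) - 1 := by
        have h1 : (2:ℝ) ≤ (n0:ℝ) := by exact_mod_cast (by omega : 2 ≤ n0)
        have h2 : (0:ℝ) ≤ (k:ℝ) := Nat.cast_nonneg k
        linarith
      have hmon : y N * γ (n0+k+1) / (t + (n0:ℝ) + (k:ℝ)) ≤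
          y N * γ (n0+k+1) / (t + (n0:ℝ) + (k:ℝ) - 1) :=
        div_le_div_of_nonneg_left (mul_nonneg hyN0 hg.le) hden1 (by linarith)
      rw [hfval, ← mul_div_assoc]
      linarith
    have hsum_le : ∑ k ∈ Finset.range (N - n0), (y (n0+k+1) - y (n0+k)) ≤
        y N * ∑ k ∈ Finset.range (N - n0), f (k + N0) := by
      rw [Finset.mul_sum]
      exact Finset.sum_le_sum hterm
    have htail_le : ∑ k ∈ Finset.range (N - n0), f (k + N0) ≤ 1/4 := by
      have hshift : Summable (fun k : ℕ => f (k + N0)) :=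
        (summable_nat_add_iff N0).mpr hS'
      have := Summable.sum_le_tsum (Finset.range (N - n0)) (fun i _ => hf_nn (i + N0)) hshift
      linarith
    have : y N * ∑ k ∈ Finset.range (N - n0), f (k + N0) ≤ y N * (1/4) :=
      mul_le_mul_of_nonneg_left htail_le hyN0
    linarith
  refine ⟨(4/3) * y n0, ?_⟩
  intro n hn
  have hyn0 : 0 < y n0 := hy_pos n0 (by omega)
  rcases le_or_gt n n0 with h | h
  · have := hy_mono n n0 hn h
    show y n ≤ _
    linarith
  · have := hkey n h.le
    show y n ≤ _
    linarith
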